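/- arXiv:2105.13199 — 3 statements merged into one kernel-verified Lean document; each statement's English description precedes it below -/
import Mathlib

section
/- Let p₁, p₂ be continuous strictly positive probability densities on the circle [-π,π], let X have density p₁ with ∫ sin(x) p₁(x) dx = 0, let π₀ = p₂/p₁ be differentiable, and let τᶜ be the circular Stein kernel of p₁. Then the Wasserstein-1 distance between the laws with densities p₂ and p₁ is at least |∫_{-π}^{π} τᶜ(x) π₀'(x) p₁(x) dx|. -/
open Real MeasureTheory intervalIntegral Set

/-- Lower bound on the Wasserstein-1 distance between two circular distributions
(Theorem 4.2, lower bound). -/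
theorem wasserstein_lower_bound
    (p₁ p₂ : ℝ → ℝ) (h₁c : Continuous p₁) (h₂c : Continuous p₂)
    (h₁pos : ∀ x, 0 < p₁ x) (h₂pos : ∀ x, 0 < p₂ x)
    (h₁prob : ∫ x in (-π)..π, p₁ x = 1) (h₂prob : ∫ x in (-π)..π, p₂ x = 1)
    (hmean : ∫ x in (-π)..π, Real.sin x * p₁ x = 0)
    (hπ₀ : Differentiable ℝ (fun x => p₂ x / p₁ x)) :
    |∫ x in (-π)..π,
        (-(1 / p₁ x) * ∫ y in (-π)..x, Real.sin y * p₁ y)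
          * deriv (fun t => p₂ t / p₁ t) x * p₁ x|
      ≤ ⨆ h : {h : ℝ → ℝ // LipschitzWith 1 h},
          |(∫ x in (-π)..π, h.1 x * p₂ x) - ∫ x in (-π)..π, h.1 x * p₁ x| := by
  have h₁ne : ∀ x, p₁ x ≠ 0 := fun x => (h₁pos x).ne'
  set π₀ : ℝ → ℝ := fun t => p₂ t / p₁ t with hπ₀def
  set F : ℝ → ℝ := fun x => ∫ y in (-π)..x, Real.sin y * p₁ y with hFdef
  have hπ₀cont : Continuous π₀ := hπ₀.continuous
  have hπlt : (-π : ℝ) ≤ π := by linarith [Real.pi_pos]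
  -- Bounded above: every term in the sup is at most 4π
  have hbdd : BddAbove (Set.range fun h : {h : ℝ → ℝ // LipschitzWith 1 h} =>
      |(∫ x in (-π)..π, h.1 x * p₂ x) - ∫ x in (-π)..π, h.1 x * p₁ x|) := by
    refine ⟨4 * π, ?_⟩
    rintro _ ⟨⟨h, hlip⟩, rfl⟩
    have hhc : Continuous h := hlip.continuous
    set c := h (-π) with hc
    have key : ∀ p : ℝ → ℝ, Continuous p → (∀ x, 0 < p x) → (∫ x in (-π)..π, p x = 1) →
        |(∫ x in (-π)..π, h x * p x) - c| ≤ 2 * π := by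
      intro p hpc hppos hprob
      have h1 : (∫ x in (-π)..π, h x * p x) - c = ∫ x in (-π)..π, (h x - c) * p x := by
        rw [show (fun x => (h x - c) * p x) = fun x => h x * p x - c * p x by funext x; ring]
        rw [intervalIntegral.integral_sub (f := fun x => h x * p x) (g := fun x => c * p x) ((hhc.mul hpc).intervalIntegrable _ _)
          ((continuous_const.mul hpc).intervalIntegrable _ _),
          intervalIntegral.integral_const_mul, hprob, mul_one]
      rw [h1]
      calc |∫ x in (-π)..π, (h x - c) * p x|
          ≤ ∫ x in (-π)..π, |(h x - c) * p x| :=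
            intervalIntegral.abs_integral_le_integral_abs hπlt
        _ ≤ ∫ x in (-π)..π, 2 * π * p x := by
            apply intervalIntegral.integral_mono_on hπlt
            · exact ((hhc.sub continuous_const).mul hpc).abs.intervalIntegrable _ _
            · exact (continuous_const.mul hpc).intervalIntegrable _ _
            · intro x hx
              rw [abs_mul, abs_of_pos (hppos x)]
              have hd : |h x - c| ≤ |x - (-π)| := by
                have := hlip.dist_le_mul x (-π)
                simpa [Real.dist_eq] using this
              have : |x - (-π)| ≤ 2 * π := by
                rw [abs_of_nonneg (by linarith [hx.1])]
                linarith [hx.2]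
              exact mul_le_mul_of_nonneg_right (hd.trans this) (hppos x).le
        _ = 2 * π := by
            rw [intervalIntegral.integral_const_mul, hprob, mul_one]
    have hA := key p₂ h₂c h₂pos h₂prob
    have hB := key p₁ h₁c h₁pos h₁prob
    calc |(∫ x in (-π)..π, h x * p₂ x) - ∫ x in (-π)..π, h x * p₁ x|
        = |((∫ x in (-π)..π, h x * p₂ x) - c) - ((∫ x in (-π)..π, h x * p₁ x) - c)| := by
          rw [sub_sub_sub_cancel_right]
      _ ≤ |(∫ x in (-π)..π, h x * p₂ x) - c| + |(∫ x in (-π)..π, h x * p₁ x) - c| :=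
          abs_sub _ _
      _ ≤ 2 * π + 2 * π := add_le_add hA hB
      _ = 4 * π := by ring
  -- rewrite the left-hand integrand
  have heq : (∫ x in (-π)..π,
        (-(1 / p₁ x) * ∫ y in (-π)..x, Real.sin y * p₁ y)
          * deriv (fun t => p₂ t / p₁ t) x * p₁ x)
      = ∫ x in (-π)..π, -(F x * deriv π₀ x) := by
    apply intervalIntegral.integral_congr
    intro x _
    simp only [hFdef, hπ₀def]
    field_simp [h₁ne x]
  rw [heq]
  by_cases hint : IntervalIntegrable (fun x => F x * deriv π₀ x) volume (-π) π
  · -- the interesting case, integration by parts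
    have hsinp₁ : Continuous fun x => Real.sin x * p₁ x := Real.continuous_sin.mul h₁c
    have hFderiv : ∀ x : ℝ, HasDerivAt F (Real.sin x * p₁ x) x := by
      intro x
      exact intervalIntegral.integral_hasDerivAt_right
        (hsinp₁.intervalIntegrable _ _)
        (hsinp₁.stronglyMeasurableAtFilter _ _)
        hsinp₁.continuousAt
    have hprod : ∀ x ∈ Set.uIcc (-π) π, HasDerivAt (fun t => F t * π₀ t)
        (Real.sin x * p₁ x * π₀ x + F x * deriv π₀ x) x := by
      intro x _
      exact (hFderiv x).mul (hπ₀ x).hasDerivAt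
    have hintsum : IntervalIntegrable
        (fun x => Real.sin x * p₁ x * π₀ x + F x * deriv π₀ x) volume (-π) π :=
      ((hsinp₁.mul hπ₀cont).intervalIntegrable _ _).add hint
    have hFTC := intervalIntegral.integral_eq_sub_of_hasDerivAt hprod hintsum
    have hFpi : F π = 0 := hmean
    have hFnegpi : F (-π) = 0 := intervalIntegral.integral_same
    rw [hFpi, hFnegpi, zero_mul, zero_mul, sub_zero] at hFTC
    rw [intervalIntegral.integral_add (f := fun x => Real.sin x * p₁ x * π₀ x) (g := fun x => F x * deriv π₀ x) ((hsinp₁.mul hπ₀cont).intervalIntegrable _ _) hint]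
      at hFTC
    have hsplit : (∫ x in (-π)..π, F x * deriv π₀ x)
        = -∫ x in (-π)..π, Real.sin x * p₁ x * π₀ x := by linarith
    have hsinp₂ : (∫ x in (-π)..π, Real.sin x * p₁ x * π₀ x)
        = ∫ x in (-π)..π, Real.sin x * p₂ x := by
      apply intervalIntegral.integral_congr
      intro x _
      simp only [hπ₀def]
      field_simp [h₁ne x]
    have hval : (∫ x in (-π)..π, -(F x * deriv π₀ x))
        = ∫ x in (-π)..π, Real.sin x * p₂ x := by
      rw [intervalIntegral.integral_neg, hsplit, hsinp₂, neg_neg]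
    rw [hval]
    -- now bound by the sup term for h = sin
    have hsinlip : LipschitzWith 1 Real.sin := by
      apply lipschitzWith_of_nnnorm_deriv_le Real.differentiable_sin
      intro x
      rw [Real.deriv_sin]
      simpa [← NNReal.coe_le_coe, Real.nnnorm_of_nonneg, Real.norm_eq_abs] using
        Real.abs_cos_le_one x
    refine le_ciSup_of_le hbdd ⟨Real.sin, hsinlip⟩ ?_
    simp only [hmean, sub_zero]
    exact le_rfl
  · have : ¬ IntervalIntegrable (fun x => -(F x * deriv π₀ x)) volume (-π) π := by
      intro hc
      have := hc.neg
      simp only [Pi.neg_def, neg_neg] at this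
      exact hint this
    rw [intervalIntegral.integral_undef this, abs_zero]
    exact Real.iSup_nonneg fun h => abs_nonneg _
end

section
/- Let the wrapped normal density be written via the Jacobi triple product as p_WN(θ) = (1/2π) ∏_{n=1}^∞ (1 - e^{-σ²n})(1 + e^{-2σ²(n-1/2)} + 2cos(θ) e^{-σ²(n-1/2)}). Then its logarithmic derivative is (log p_WN)'(θ) = -∑_{n=1}^∞ sin(θ) / (cosh(σ²(n - 1/2)) + cos(θ)). -/
open Real Topology

section WrappedNormalAux

variable (σ : ℝ)

private noncomputable def wnA (n : ℕ) : ℝ := Real.exp (-σ ^ 2 * ((n : ℝ) + 1))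

private noncomputable def wnB (n : ℕ) : ℝ :=
  Real.exp (-σ ^ 2 * (((n : ℝ) + 1) - 1 / 2))

private noncomputable def wnG (n : ℕ) (t : ℝ) : ℝ :=
  1 + wnB σ n ^ 2 + 2 * Real.cos t * wnB σ n

private noncomputable def wnF (n : ℕ) (t : ℝ) : ℝ := (1 - wnA σ n) * wnG σ n t

variable {σ} (hσ : 0 < σ)
include hσ

private lemma wnB_pos (n : ℕ) : 0 < wnB σ n := Real.exp_pos _

private lemma wnB_lt_one (n : ℕ) : wnB σ n < 1 := by
  have h : (0:ℝ) < σ ^ 2 := by positivity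
  unfold wnB
  rw [Real.exp_lt_one_iff]
  nlinarith [Nat.cast_nonneg (α := ℝ) n]

private lemma wnB_le (n : ℕ) : wnB σ n ≤ wnB σ 0 := by
  apply Real.exp_le_exp.2
  have h : (0:ℝ) < σ ^ 2 := by positivity
  have : (0:ℝ) ≤ (n:ℝ) := Nat.cast_nonneg n
  push_cast
  nlinarith

private lemma wnA_pos (n : ℕ) : 0 < wnA σ n := Real.exp_pos _

private lemma wnA_le_wnB (n : ℕ) : wnA σ n ≤ wnB σ n := by
  apply Real.exp_le_exp.2
  have h : (0:ℝ) < σ ^ 2 := by positivity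
  nlinarith

private lemma wnB_le_pow (n : ℕ) : wnB σ n ≤ Real.exp (-σ ^ 2) ^ n := by
  rw [← Real.exp_nat_mul]
  apply Real.exp_le_exp.2
  have h : (0:ℝ) < σ ^ 2 := by positivity
  nlinarith

private lemma wnG_lb (n : ℕ) (t : ℝ) : (1 - wnB σ n) ^ 2 ≤ wnG σ n t := by
  have h1 := Real.neg_one_le_cos t
  have h2 := wnB_pos hσ (σ := σ) n
  unfold wnG; nlinarith

private lemma wnG_ub (n : ℕ) (t : ℝ) : wnG σ n t ≤ (1 + wnB σ n) ^ 2 := by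
  have h1 := Real.cos_le_one t
  have h2 := wnB_pos hσ (σ := σ) n
  unfold wnG; nlinarith

private lemma wnG_pos (n : ℕ) (t : ℝ) : 0 < wnG σ n t := by
  have h1 := wnG_lb hσ (σ := σ) n t
  have h2 := wnB_lt_one hσ (σ := σ) n
  nlinarith

private lemma wnF_pos (n : ℕ) (t : ℝ) : 0 < wnF σ n t := by
  have h1 := wnG_pos hσ (σ := σ) n t
  have h3 : wnA σ n < 1 := lt_of_le_of_lt (wnA_le_wnB hσ n) (wnB_lt_one hσ n)
  unfold wnF; nlinarith

end WrappedNormalAux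

/-- The logarithmic derivative of the wrapped normal density, written via the
Jacobi triple product. -/
theorem wrapped_normal_log_deriv (σ : ℝ) (hσ : 0 < σ) (θ : ℝ) :
    deriv (fun t => Real.log ((1 / (2 * π)) *
        ∏' n : ℕ, (1 - Real.exp (-σ ^ 2 * ((n : ℝ) + 1)))
          * (1 + Real.exp (-2 * σ ^ 2 * (((n : ℝ) + 1) - 1 / 2))
            + 2 * Real.cos t * Real.exp (-σ ^ 2 * (((n : ℝ) + 1) - 1 / 2))))) θ
      = -∑' n : ℕ,
          Real.sin θ / (Real.cosh (σ ^ 2 * (((n : ℝ) + 1) - 1 / 2)) + Real.cos θ) := by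
  have hπ : (0:ℝ) < π := Real.pi_pos
  set r : ℝ := Real.exp (-σ ^ 2) with hr_def
  have hr0 : 0 < r := Real.exp_pos _
  have hr1 : r < 1 := by
    rw [hr_def, Real.exp_lt_one_iff]; nlinarith
  set c : ℝ := 1 - wnB σ 0 with hc_def
  have hc : 0 < c := by
    have := wnB_lt_one hσ (σ := σ) 0; simp [hc_def]; linarith
  have hc1 : c ≤ 1 := by
    have := wnB_pos hσ (σ := σ) 0; simp [hc_def]; linarith
  -- log(1-x) lower bound
  have hlog_one_sub : ∀ x : ℝ, 0 < x → x ≤ wnB σ 0 → -(x / c) ≤ Real.log (1 - x) := by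
    intro x hx hxB
    have h1 : 0 < 1 - x := by simp [hc_def] at hc1 ⊢; linarith [hc]
    have h2 := Real.log_le_sub_one_of_pos (x := (1 - x)⁻¹) (inv_pos.2 h1)
    rw [Real.log_inv] at h2
    have h3 : (1 - x)⁻¹ - 1 = x / (1 - x) := by field_simp; ring
    have h4 : x / (1 - x) ≤ x / c := by
      apply div_le_div_of_nonneg_left hx.le hc
      linarith
    linarith
  -- log upper bound
  have hlog_le : ∀ x : ℝ, 0 ≤ x → Real.log (1 + x) ≤ x := by
    intro x hx
    have := Real.log_le_sub_one_of_pos (x := 1 + x) (by linarith)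
    linarith
  -- abs bound on log of factors
  have habs : ∀ t (n : ℕ), |Real.log (wnF σ n t)| ≤ (4 / c) * r ^ n := by
    intro t n
    have hBpos := wnB_pos hσ (σ := σ) n
    have hBlt := wnB_lt_one hσ (σ := σ) n
    have hBle := wnB_le hσ (σ := σ) n
    have hApos := wnA_pos hσ (σ := σ) n
    have hAB := wnA_le_wnB hσ (σ := σ) n
    have hAlt : wnA σ n < 1 := lt_of_le_of_lt hAB hBlt
    have hGpos := wnG_pos hσ (σ := σ) n t
    have hBr := wnB_le_pow hσ (σ := σ) n
    have hsplit : Real.log (wnF σ n t)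
        = Real.log (1 - wnA σ n) + Real.log (wnG σ n t) := by
      unfold wnF
      rw [Real.log_mul (by linarith) (ne_of_gt hGpos)]
    have hA1 : |Real.log (1 - wnA σ n)| ≤ wnA σ n / c := by
      rw [abs_le]
      constructor
      · have := hlog_one_sub (wnA σ n) hApos (le_trans hAB hBle); linarith
      · have h1 : Real.log (1 - wnA σ n) ≤ 0 :=
          Real.log_nonpos (by linarith) (by linarith)
        have : 0 ≤ wnA σ n / c := by positivity
        linarith
    have hG1 : |Real.log (wnG σ n t)| ≤ 2 * wnB σ n / c := by
      rw [abs_le]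
      constructor
      · have h1 : Real.log ((1 - wnB σ n) ^ 2) ≤ Real.log (wnG σ n t) :=
          Real.log_le_log (pow_pos (by linarith) 2) (wnG_lb hσ n t)
        rw [Real.log_pow] at h1
        have h2 := hlog_one_sub (wnB σ n) hBpos hBle
        push_cast at h1
        have : -(2 * wnB σ n / c) = 2 * (-(wnB σ n / c)) := by ring
        rw [this]
        calc 2 * (-(wnB σ n / c)) ≤ 2 * Real.log (1 - wnB σ n) := by linarith
          _ ≤ Real.log (wnG σ n t) := h1
      · have h1 : Real.log (wnG σ n t) ≤ Real.log ((1 + wnB σ n) ^ 2) :=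
          Real.log_le_log hGpos (wnG_ub hσ n t)
        rw [Real.log_pow] at h1
        have h2 := hlog_le (wnB σ n) hBpos.le
        push_cast at h1
        have h3 : 2 * wnB σ n ≤ 2 * wnB σ n / c := by
          rw [le_div_iff₀ hc]
          nlinarith
        linarith
    calc |Real.log (wnF σ n t)| ≤ |Real.log (1 - wnA σ n)| + |Real.log (wnG σ n t)| := by
          rw [hsplit]; exact abs_add_le _ _
      _ ≤ wnA σ n / c + 2 * wnB σ n / c := by linarith
      _ ≤ (4 / c) * r ^ n := by
          rw [← add_div, div_mul_eq_mul_div, div_le_div_iff₀ hc hc]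
          nlinarith [pow_nonneg hr0.le n]
  have hsum_geo : Summable (fun n : ℕ => (4 / c) * r ^ n) :=
    (summable_geometric_of_lt_one hr0.le hr1).mul_left _
  have hlog_sum : ∀ t : ℝ, Summable (fun n : ℕ => Real.log (wnF σ n t)) := by
    intro t
    apply Summable.of_abs
    exact hsum_geo.of_nonneg_of_le (fun n => abs_nonneg _) (habs t)
  -- rewrite the function
  have hfun : (fun t => Real.log ((1 / (2 * π)) *
        ∏' n : ℕ, (1 - Real.exp (-σ ^ 2 * ((n : ℝ) + 1)))
          * (1 + Real.exp (-2 * σ ^ 2 * (((n : ℝ) + 1) - 1 / 2))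
            + 2 * Real.cos t * Real.exp (-σ ^ 2 * (((n : ℝ) + 1) - 1 / 2)))))
      = fun t => Real.log (1 / (2 * π)) + ∑' n : ℕ, Real.log (wnF σ n t) := by
    funext t
    have h1 : (∏' n : ℕ, (1 - Real.exp (-σ ^ 2 * ((n : ℝ) + 1)))
          * (1 + Real.exp (-2 * σ ^ 2 * (((n : ℝ) + 1) - 1 / 2))
            + 2 * Real.cos t * Real.exp (-σ ^ 2 * (((n : ℝ) + 1) - 1 / 2))))
        = ∏' n : ℕ, wnF σ n t := by
      apply tprod_congr
      intro n
      have : Real.exp (-2 * σ ^ 2 * (((n : ℝ) + 1) - 1 / 2)) = wnB σ n ^ 2 := by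
        unfold wnB
        rw [← Real.exp_nat_mul]
        congr 1
        push_cast
        ring
      rw [this]
      rfl
    have h2 : (∏' n : ℕ, wnF σ n t) = Real.exp (∑' n : ℕ, Real.log (wnF σ n t)) := by
      have h := Real.rexp_tsum_eq_tprod (f := fun n => wnF σ n t)
        (fun n => wnF_pos hσ n t) (hlog_sum t)
      exact h.symm
    rw [h1, h2, Real.log_mul (by positivity) (Real.exp_ne_zero _), Real.log_exp]
  rw [hfun]
  -- derivative of each term
  set F' : ℕ → ℝ → ℝ := fun n y => -(2 * Real.sin y * wnB σ n) / wnG σ n y with hF'_def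
  have hderiv : ∀ (n : ℕ) (y : ℝ),
      HasDerivAt (fun t => Real.log (wnF σ n t)) (F' n y) y := by
    intro n y
    have hGpos := wnG_pos hσ (σ := σ) n y
    have hAlt : wnA σ n < 1 := lt_of_le_of_lt (wnA_le_wnB hσ n) (wnB_lt_one hσ n)
    have h1 : HasDerivAt (fun t : ℝ => wnG σ n t) (-(2 * Real.sin y * wnB σ n)) y := by
      have h0 : HasDerivAt (fun t : ℝ => 1 + wnB σ n ^ 2 + 2 * Real.cos t * wnB σ n)
          (2 * -Real.sin y * wnB σ n) y :=
        (((Real.hasDerivAt_cos y).const_mul 2).mul_const (wnB σ n)).const_add (1 + wnB σ n ^ 2)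
      have : (2 : ℝ) * -Real.sin y * wnB σ n = -(2 * Real.sin y * wnB σ n) := by ring
      rw [this] at h0
      exact h0
    have h2 : HasDerivAt (fun t : ℝ => wnF σ n t)
        ((1 - wnA σ n) * -(2 * Real.sin y * wnB σ n)) y := h1.const_mul (1 - wnA σ n)
    have h3 := h2.log (ne_of_gt (wnF_pos hσ n y))
    have h4 : (1 - wnA σ n) * -(2 * Real.sin y * wnB σ n) / wnF σ n y = F' n y := by
      rw [hF'_def]
      unfold wnF
      rw [mul_div_mul_left _ _ (by linarith : (1:ℝ) - wnA σ n ≠ 0)]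
    rwa [h4] at h3
  have hbound : ∀ (n : ℕ) (y : ℝ), ‖F' n y‖ ≤ (2 / c ^ 2) * r ^ n := by
    intro n y
    have hBpos := wnB_pos hσ (σ := σ) n
    have hBlt := wnB_lt_one hσ (σ := σ) n
    have hBle := wnB_le hσ (σ := σ) n
    have hGpos := wnG_pos hσ (σ := σ) n y
    have hGlb := wnG_lb hσ (σ := σ) n y
    have hBr := wnB_le_pow hσ (σ := σ) n
    have hcB : c ≤ 1 - wnB σ n := by simp [hc_def]; linarith
    have hc2 : c ^ 2 ≤ wnG σ n y := by nlinarith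
    rw [hF'_def, Real.norm_eq_abs, abs_div, abs_of_pos hGpos, abs_neg, abs_mul, abs_mul,
      abs_of_nonneg (by norm_num : (0:ℝ) ≤ 2), abs_of_pos hBpos]
    have hsin := abs_sin_le_one y
    calc 2 * |Real.sin y| * wnB σ n / wnG σ n y ≤ 2 * 1 * r ^ n / c ^ 2 := by
          gcongr
      _ = (2 / c ^ 2) * r ^ n := by ring
  have hsum_geo2 : Summable (fun n : ℕ => (2 / c ^ 2) * r ^ n) :=
    (summable_geometric_of_lt_one hr0.le hr1).mul_left _
  have hmain : HasDerivAt (fun t => Real.log (1 / (2 * π)) + ∑' n : ℕ, Real.log (wnF σ n t))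
      (∑' n : ℕ, F' n θ) θ := by
    apply HasDerivAt.const_add
    exact hasDerivAt_tsum hsum_geo2 hderiv hbound (hlog_sum θ) θ
  rw [hmain.deriv, ← tsum_neg]
  apply tsum_congr
  intro n
  have hBpos := wnB_pos hσ (σ := σ) n
  have hGpos := wnG_pos hσ (σ := σ) n θ
  have hBexp : wnB σ n = Real.exp (-(σ ^ 2 * (((n : ℝ) + 1) - 1 / 2))) := by
    unfold wnB; ring_nf
  have hcosh : Real.cosh (σ ^ 2 * (((n : ℝ) + 1) - 1 / 2)) + Real.cos θ
      = wnG σ n θ / (2 * wnB σ n) := by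
    rw [Real.cosh_eq, hBexp]
    unfold wnG
    rw [hBexp]
    have h1 : Real.exp (σ ^ 2 * (((n : ℝ) + 1) - 1 / 2))
        = (Real.exp (-(σ ^ 2 * (((n : ℝ) + 1) - 1 / 2))))⁻¹ := by
      rw [← Real.exp_neg, neg_neg]
    rw [h1]
    have h2 : Real.exp (-(σ ^ 2 * (((n : ℝ) + 1) - 1 / 2))) ≠ 0 := Real.exp_ne_zero _
    field_simp
  rw [hF'_def, hcosh, div_div_eq_mul_div]
  ring
end

section
/- For every σ > 0 and every θ ∈ [-π, π], ∑_{n=1}^∞ 1/(cosh(σ²(n - 1/2)) + cos(θ)) ≤ π²/σ⁴, i.e. the series is maximized over θ at cos θ = -1 and there is bounded by π²/σ⁴. -/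
open Real Set

lemma cosh_ge_one_add_sq_half (x : ℝ) : 1 + x ^ 2 / 2 ≤ Real.cosh x := by
  have h : Real.cosh x = 1 + 2 * Real.sinh (x / 2) ^ 2 := by
    have := Real.cosh_two_mul (x / 2)
    rw [show 2 * (x / 2) = x by ring] at this
    rw [this, Real.cosh_sq]; ring
  rw [h]
  have hs : (x / 2) ^ 2 ≤ Real.sinh (x / 2) ^ 2 := by
    rcases le_or_gt 0 x with hx | hx
    · have h1 : x / 2 ≤ Real.sinh (x / 2) := Real.self_le_sinh_iff.2 (by linarith)
      have h2 : 0 ≤ x / 2 := by linarith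
      nlinarith
    · have h1 : Real.sinh (x / 2) ≤ x / 2 := Real.sinh_le_self_iff.2 (by linarith)
      have h2 : x / 2 ≤ 0 := by linarith
      nlinarith
  nlinarith

lemma hasSum_odd_sq : HasSum (fun k : ℕ => (1 : ℝ) / ((2 * k + 1 : ℕ) : ℝ) ^ 2) (π ^ 2 / 8) := by
  set f : ℕ → ℝ := fun n => (1 : ℝ) / (n : ℝ) ^ 2 with hf
  have htot : HasSum f (π ^ 2 / 6) := hasSum_zeta_two
  have heven : HasSum (fun k : ℕ => f (2 * k)) (π ^ 2 / 24) := by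
    have h4 := htot.mul_left (1 / 4)
    have heq : (fun k : ℕ => (1 / 4 : ℝ) * f k) = fun k : ℕ => f (2 * k) := by
      funext k
      simp only [hf]
      rcases Nat.eq_zero_or_pos k with rfl | hk
      · simp
      · push_cast; field_simp; ring
    rw [heq] at h4
    rwa [show (1 / 4 : ℝ) * (π ^ 2 / 6) = π ^ 2 / 24 by ring] at h4
  have hodd_summable : Summable (fun k : ℕ => f (2 * k + 1)) :=
    htot.summable.comp_injective (fun a b hab => by omega)
  have hcomb : HasSum f (π ^ 2 / 24 + ∑' k : ℕ, f (2 * k + 1)) :=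
    HasSum.even_add_odd heven hodd_summable.hasSum
  have huniq : π ^ 2 / 24 + ∑' k : ℕ, f (2 * k + 1) = π ^ 2 / 6 := hcomb.unique htot
  have hval : ∑' k : ℕ, f (2 * k + 1) = π ^ 2 / 8 := by linarith
  exact hval ▸ hodd_summable.hasSum

lemma hasSum_half_sq : HasSum (fun k : ℕ => (1 : ℝ) / ((k : ℝ) + 1 / 2) ^ 2) (π ^ 2 / 2) := by
  have := hasSum_odd_sq.mul_left 4
  have heq : (fun k : ℕ => (4 : ℝ) * (1 / ((2 * k + 1 : ℕ) : ℝ) ^ 2)) =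
      fun k : ℕ => (1 : ℝ) / ((k : ℝ) + 1 / 2) ^ 2 := by
    funext k
    push_cast
    rw [eq_div_iff (by positivity)]
    field_simp
    ring
  rw [heq] at this
  rwa [show (4 : ℝ) * (π ^ 2 / 8) = π ^ 2 / 2 by ring] at this

/-- Bound on the wrapped normal log-derivative series, uniformly in `θ`. -/
theorem cosh_cos_series_bound (σ : ℝ) (hσ : 0 < σ) (θ : ℝ)
    (hθ : θ ∈ Set.Icc (-π) π) :
    ∑' n : ℕ, 1 / (Real.cosh (σ ^ 2 * (((n : ℝ) + 1) - 1 / 2)) + Real.cos θ)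
      ≤ π ^ 2 / σ ^ 4 := by
  have hσ2 : 0 < σ ^ 2 := by positivity
  have hσ4 : 0 < σ ^ 4 := by positivity
  set F := fun n : ℕ => 1 / (Real.cosh (σ ^ 2 * (((n : ℝ) + 1) - 1 / 2)) + Real.cos θ) with hF
  set G := fun n : ℕ => 2 / σ ^ 4 * (1 / ((n : ℝ) + 1 / 2) ^ 2) with hG
  have hkey : ∀ n : ℕ, σ ^ 4 * ((n : ℝ) + 1 / 2) ^ 2 / 2 ≤
      Real.cosh (σ ^ 2 * (((n : ℝ) + 1) - 1 / 2)) + Real.cos θ := by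
    intro n
    have h1 := cosh_ge_one_add_sq_half (σ ^ 2 * (((n : ℝ) + 1) - 1 / 2))
    have h2 : (-1 : ℝ) ≤ Real.cos θ := Real.neg_one_le_cos θ
    nlinarith
  have hdpos : ∀ n : ℕ, 0 < Real.cosh (σ ^ 2 * (((n : ℝ) + 1) - 1 / 2)) + Real.cos θ := by
    intro n
    refine lt_of_lt_of_le ?_ (hkey n)
    have : (0 : ℝ) < ((n : ℝ) + 1 / 2) ^ 2 := by positivity
    positivity
  have hFG : ∀ n, F n ≤ G n := by
    intro n
    rw [hF, hG]
    simp only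
    rw [div_mul_div_comm, mul_one]
    rw [div_le_div_iff₀ (hdpos n) (by positivity)]
    nlinarith [hkey n]
  have hGsum : HasSum G (2 / σ ^ 4 * (π ^ 2 / 2)) := hasSum_half_sq.mul_left _
  have hFsummable : Summable F :=
    Summable.of_nonneg_of_le (fun n => le_of_lt (by exact div_pos one_pos (hdpos n)))
      hFG hGsum.summable
  calc ∑' n, F n ≤ ∑' n, G n := Summable.tsum_le_tsum hFG hFsummable hGsum.summable
    _ = 2 / σ ^ 4 * (π ^ 2 / 2) := hGsum.tsum_eq
    _ = π ^ 2 / σ ^ 4 := by field_simp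
end
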